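/- Let r ≥ 1, ω = exp(2πi/r), n ≥ 1. For e : Finset (Fin n) and s : ℕ let K^{(e,s)} : Matrix (Fin n → ZMod r) (Fin n → ZMod r) ℂ be the permutation matrix with K^{(e,s)} j i = 1 if (j t = i t + s for t ∈ e and j t = i t for t ∉ e), else 0. Let E be a finite set of pairs (e, s) with e ⊆ Fin n nonempty and 1 ≤ s ≤ r−1, let α : E → ℝ, λ = Σ_{(e,s)∈E} α(e,s), and let π⋆ i = 1/r if i is constant, else 0. Let P = exp((−λ) • 1 + Σ_{(e,s)∈E} α(e,s) • K^{(e,s)}).mulVec π⋆ and let F_n j i = ω^{Σ_t (i t).val·(j t).val}. Then for every i : Fin n → ZMod r: if Σ_t i t = 0 in ZMod r then (F_n.mulVec P) i = exp(Σ_{(e,s)∈E} α(e,s)·(ω^{s·Σ_{t∈e}(i t).val} − 1)), and otherwise (F_n.mulVec P) i = 0. -/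

import Mathlib

open Matrix
open NormedSpace -- for `exp`

/-- Auxiliary: if `v` is a left eigenvector of `A` with eigenvalue `c`, then
`v ⬝ᵥ (exp ℂ A) *ᵥ w = Complex.exp c * (v ⬝ᵥ w)`. -/
lemma aux_exp_left_eigen {m : Type*} [Fintype m] [DecidableEq m]
    (A : Matrix m m ℂ) (v w : m → ℂ) (c : ℂ) (hv : v ᵥ* A = c • v) :
    v ⬝ᵥ (exp A) *ᵥ w = Complex.exp c * (v ⬝ᵥ w) := by
  letI : SeminormedRing (Matrix m m ℂ) := Matrix.linftyOpSemiNormedRing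
  letI : NormedRing (Matrix m m ℂ) := Matrix.linftyOpNormedRing
  letI : NormedAlgebra ℂ (Matrix m m ℂ) := Matrix.linftyOpNormedAlgebra
  have hpow : ∀ k : ℕ, v ᵥ* (A ^ k) = (c ^ k) • v := by
    intro k
    induction k with
    | zero => simp [Matrix.vecMul_one]
    | succ k ih =>
      rw [pow_succ, ← Matrix.vecMul_vecMul, ih, Matrix.smul_vecMul, hv, pow_succ,
        smul_smul]
  -- the continuous linear functional `M ↦ v ⬝ᵥ M *ᵥ w`
  let φ₀ : Matrix m m ℂ →ₗ[ℂ] ℂ :=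
    { toFun := fun M => v ⬝ᵥ M *ᵥ w
      map_add' := by
        intro M N; simp [Matrix.add_mulVec, dotProduct_add]
      map_smul' := by
        intro a M; simp [Matrix.smul_mulVec, dotProduct_smul] }
  let φ : Matrix m m ℂ →L[ℂ] ℂ := LinearMap.toContinuousLinearMap φ₀
  have hφ : ∀ M, φ M = v ⬝ᵥ M *ᵥ w := fun M => rfl
  have hsum : Summable fun k : ℕ => ((k.factorial : ℂ))⁻¹ • A ^ k :=
    NormedSpace.expSeries_summable' (𝕂 := ℂ) A
  have h1 : v ⬝ᵥ (exp A) *ᵥ w = ∑' k : ℕ, ((k.factorial : ℂ))⁻¹ • (v ⬝ᵥ (A ^ k) *ᵥ w) := by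
    rw [← hφ, NormedSpace.exp_eq_tsum (𝕂 := ℂ), φ.map_tsum hsum]
    congr 1; funext k
    rw [ContinuousLinearMap.map_smul, hφ]
  have h2 : ∀ k : ℕ, v ⬝ᵥ (A ^ k) *ᵥ w = c ^ k * (v ⬝ᵥ w) := by
    intro k
    rw [Matrix.dotProduct_mulVec, hpow, smul_dotProduct, smul_eq_mul]
  rw [h1]
  have h3 : (fun k : ℕ => ((k.factorial : ℂ))⁻¹ • (v ⬝ᵥ (A ^ k) *ᵥ w))
      = fun k : ℕ => (((k.factorial : ℂ))⁻¹ • c ^ k) * (v ⬝ᵥ w) := by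
    funext k; rw [h2 k]; simp [smul_eq_mul]; ring
  rw [h3, tsum_mul_right]
  congr 1
  rw [Complex.exp_eq_exp_ℂ, NormedSpace.exp_eq_tsum (𝕂 := ℂ)]

/-- Auxiliary: powers of a root of unity only depend on the exponent mod `r`. -/
lemma aux_pow_mod {ω : ℂ} {r : ℕ} (hωr : ω ^ r = 1) (a b : ℕ) (h : a % r = b % r) :
    ω ^ a = ω ^ b := by
  have key : ∀ m : ℕ, ω ^ m = ω ^ (m % r) := by
    intro m
    conv_lhs => rw [← Nat.div_add_mod m r]
    rw [pow_add, pow_mul, hωr, one_pow, one_mul]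
  rw [key a, key b, h]

/-- First part of the Hadamard-type inversion of the ℤ_r model: the
Fourier transform of a phylogenetic tensor has components
`exp(Σ_{(e,s)∈E} α(e,s)·(ω^{s·Σ_{t∈e}(i t).val} − 1))` on index strings summing to zero,
and `0` otherwise. -/
theorem Zr_model_fourier_components
    (r : ℕ) [NeZero r] (hr : 1 ≤ r) (n : ℕ) (hn : 1 ≤ n)
    (ω : ℂ) (hω : ω = Complex.exp (2 * Real.pi * Complex.I / r))
    (K : Finset (Fin n) → ℕ → Matrix (Fin n → ZMod r) (Fin n → ZMod r) ℂ)
    (hK : ∀ (e : Finset (Fin n)) (s : ℕ) (j i : Fin n → ZMod r),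
      K e s j i = if (∀ t ∈ e, j t = i t + (s : ZMod r)) ∧ (∀ t ∉ e, j t = i t)
        then 1 else 0)
    (E : Finset (Finset (Fin n) × ℕ))
    (hE : ∀ p ∈ E, p.1.Nonempty ∧ 1 ≤ p.2 ∧ p.2 ≤ r - 1)
    (α : Finset (Fin n) × ℕ → ℝ)
    (lam : ℝ) (hlam : lam = ∑ p ∈ E, α p)
    (πs : (Fin n → ZMod r) → ℂ)
    (hπ : ∀ i : Fin n → ZMod r,
      πs i = if ∃ c : ZMod r, ∀ t : Fin n, i t = c then 1 / (r : ℂ) else 0)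
    (P : (Fin n → ZMod r) → ℂ)
    (hP : P = (exp ((-lam : ℂ) • (1 : Matrix (Fin n → ZMod r) (Fin n → ZMod r) ℂ)
        + ∑ p ∈ E, (α p : ℂ) • K p.1 p.2)).mulVec πs)
    (F : Matrix (Fin n → ZMod r) (Fin n → ZMod r) ℂ)
    (hF : ∀ j i : Fin n → ZMod r, F j i = ω ^ (∑ t : Fin n, (i t).val * (j t).val)) :
    ∀ i : Fin n → ZMod r,
      F.mulVec P i =
        if (∑ t : Fin n, i t) = 0
        then Complex.exp (∑ p ∈ E, (α p : ℂ) * (ω ^ (p.2 * ∑ t ∈ p.1, (i t).val) - 1))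
        else 0 := by
  have hprim : IsPrimitiveRoot ω r := by
    rw [hω]; exact Complex.isPrimitiveRoot_exp r (NeZero.ne r)
  have hωr : ω ^ r = 1 := hprim.pow_eq_one
  intro i
  -- the left eigenvector (row of F)
  set v : (Fin n → ZMod r) → ℂ := fun j => ω ^ (∑ t : Fin n, (j t).val * (i t).val) with hv
  set S : ℕ := ∑ t : Fin n, (i t).val with hS
  -- multiplicative form of v
  have hvprod : ∀ j : Fin n → ZMod r, v j = ∏ t : Fin n, ω ^ ((j t).val * (i t).val) := by
    intro j; rw [hv]; exact (Finset.prod_pow_eq_pow_sum _ _ _).symm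
  -- key exponent lemma
  have hval : ∀ (a b : ZMod r) (c : ℕ),
      ω ^ ((a + b).val * c) = ω ^ (a.val * c) * ω ^ (b.val * c) := by
    intro a b c
    rw [← pow_add, ← add_mul]
    apply aux_pow_mod hωr
    rw [ZMod.val_add]
    exact (Nat.mod_modEq (a.val + b.val) r).mul_right c
  -- powers of natural casts
  have hvalnat : ∀ (s c : ℕ), ω ^ ((s : ZMod r).val * c) = ω ^ (s * c) := by
    intro s c
    apply aux_pow_mod hωr
    rw [ZMod.val_natCast]
    exact (Nat.mod_modEq s r).mul_right c
  classical
  -- eigenvalue of each K p.1 p.2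
  have hKeig : ∀ p : Finset (Fin n) × ℕ,
      v ᵥ* (K p.1 p.2) = (ω ^ (p.2 * ∑ t ∈ p.1, (i t).val)) • v := by
    rintro ⟨e, s⟩
    funext k
    set jd : Fin n → ZMod r := fun t => if t ∈ e then k t + (s : ZMod r) else k t with hjd
    have hcond : ∀ j : Fin n → ZMod r,
        ((∀ t ∈ e, j t = k t + (s : ZMod r)) ∧ (∀ t ∉ e, j t = k t)) ↔ j = jd := by
      intro j
      constructor
      · rintro ⟨h1, h2⟩; funext t; by_cases ht : t ∈ e <;> simp [hjd, ht, h1 t, h2 t]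
      · rintro rfl; exact ⟨fun t ht => by simp [hjd, ht], fun t ht => by simp [hjd, ht]⟩
    have hstep : (v ᵥ* K e s) k = v jd := by
      simp only [Matrix.vecMul, dotProduct, hK]
      calc ∑ j : Fin n → ZMod r, v j *
            (if (∀ t ∈ e, j t = k t + (s : ZMod r)) ∧ (∀ t ∉ e, j t = k t) then 1 else 0)
          = ∑ j : Fin n → ZMod r, (if j = jd then v j else 0) := by
            refine Finset.sum_congr rfl fun j _ => ?_
            rw [if_congr (hcond j) rfl rfl, mul_ite, mul_one, mul_zero]
        _ = v jd := by rw [Finset.sum_ite_eq' Finset.univ jd v, if_pos (Finset.mem_univ _)]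
    have hvjd : v jd = (ω ^ (s * ∑ t ∈ e, (i t).val)) * v k := by
      rw [hvprod, hvprod]
      have hterm : ∀ t : Fin n, ω ^ ((jd t).val * (i t).val)
          = (if t ∈ e then ω ^ (s * (i t).val) else 1) * ω ^ ((k t).val * (i t).val) := by
        intro t
        by_cases ht : t ∈ e
        · simp only [hjd, if_pos ht]
          rw [hval, hvalnat, mul_comm]
        · simp [hjd, ht]
      rw [Finset.prod_congr rfl fun t _ => hterm t, Finset.prod_mul_distrib]
      congr 1
      rw [Finset.prod_ite_mem, Finset.univ_inter, Finset.prod_pow_eq_pow_sum, ← Finset.mul_sum]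
    rw [hstep, hvjd, Pi.smul_apply, smul_eq_mul]
  -- v ᵥ* (a • M) = a • (v ᵥ* M)
  have hsmul : ∀ (a : ℂ) (M : Matrix (Fin n → ZMod r) (Fin n → ZMod r) ℂ),
      v ᵥ* (a • M) = a • (v ᵥ* M) := by
    intro a M
    funext j
    simp only [Matrix.vecMul, dotProduct, Matrix.smul_apply, Pi.smul_apply, smul_eq_mul,
      Finset.mul_sum]
    exact Finset.sum_congr rfl fun _ _ => by ring
  -- linearity of vecMul over finite sums
  have hsumM : ∀ (s : Finset (Finset (Fin n) × ℕ))
      (f : Finset (Fin n) × ℕ → Matrix (Fin n → ZMod r) (Fin n → ZMod r) ℂ),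
      v ᵥ* (∑ p ∈ s, f p) = ∑ p ∈ s, v ᵥ* (f p) := by
    intro s f
    induction s using Finset.induction_on with
    | empty => funext j; simp [Matrix.vecMul, dotProduct]
    | insert _ _ hx ih =>
      rw [Finset.sum_insert hx, Finset.sum_insert hx, Matrix.vecMul_add, ih]
  set A : Matrix (Fin n → ZMod r) (Fin n → ZMod r) ℂ :=
    (-lam : ℂ) • 1 + ∑ p ∈ E, (α p : ℂ) • K p.1 p.2 with hA
  set c : ℂ := (-lam : ℂ) + ∑ p ∈ E, (α p : ℂ) * ω ^ (p.2 * ∑ t ∈ p.1, (i t).val) with hc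
  have hAeig : v ᵥ* A = c • v := by
    have h1 : v ᵥ* A = (-lam : ℂ) • v
        + ∑ p ∈ E, ((α p : ℂ) * ω ^ (p.2 * ∑ t ∈ p.1, (i t).val)) • v := by
      rw [hA, Matrix.vecMul_add, hsmul, Matrix.vecMul_one, hsumM]
      congr 1
      refine Finset.sum_congr rfl fun p _ => ?_
      rw [hsmul, hKeig p, smul_smul]
    rw [h1, hc, add_smul, ← Finset.sum_smul]
  have hmain : F.mulVec P i = Complex.exp c * (v ⬝ᵥ πs) := by
    have h1 : F.mulVec P i = v ⬝ᵥ P := by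
      simp only [Matrix.mulVec, dotProduct]
      exact Finset.sum_congr rfl fun j _ => by rw [hF i j]
    rw [h1, hP]
    exact aux_exp_left_eigen A v πs c hAeig
  -- computing v ⬝ᵥ πs
  set x : ℂ := ω ^ S with hx
  have hdot1 : v ⬝ᵥ πs = (∑ m ∈ Finset.range r, x ^ m) * (1 / (r : ℂ)) := by
    rw [dotProduct]
    set g : ZMod r → (Fin n → ZMod r) := fun c' _ => c' with hg
    have hginj : ∀ a ∈ (Finset.univ : Finset (ZMod r)), ∀ b ∈ Finset.univ,
        g a = g b → a = b := fun a _ b _ hab => congrFun hab ⟨0, hn⟩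
    have hsub : ∑ j : Fin n → ZMod r, v j * πs j
        = ∑ j ∈ Finset.image g Finset.univ, v j * πs j := by
      refine (Finset.sum_subset (Finset.subset_univ _) ?_).symm
      intro j _ hj
      rw [hπ]
      have hne : ¬ ∃ c', ∀ t, j t = c' := by
        rintro ⟨c', hc'⟩
        exact hj (Finset.mem_image.2 ⟨c', Finset.mem_univ _, by funext t; exact (hc' t).symm⟩)
      rw [if_neg hne, mul_zero]
    have hval' : ∀ c' : ZMod r, v (g c') = x ^ c'.val := by
      intro c'
      rw [hvprod, Finset.prod_pow_eq_pow_sum, hx, ← pow_mul]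
      congr 1
      rw [hS, Finset.sum_mul]
      exact Finset.sum_congr rfl fun t _ => mul_comm _ _
    have hrange : (∑ c' : ZMod r, x ^ c'.val) = ∑ m ∈ Finset.range r, x ^ m := by
      refine Finset.sum_nbij' (fun c' => c'.val) (fun m => (m : ZMod r)) ?_ ?_ ?_ ?_ ?_
      · intro a _; exact Finset.mem_range.2 (ZMod.val_lt a)
      · intro a _; exact Finset.mem_univ _
      · intro a _; exact ZMod.natCast_rightInverse a
      · intro m hm; exact ZMod.val_cast_of_lt (Finset.mem_range.1 hm)
      · intro a _; rfl
    rw [hsub, Finset.sum_image hginj,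
      Finset.sum_congr rfl fun c' _ => by
        rw [hπ, if_pos ⟨c', fun t => rfl⟩, hval' c'],
      ← Finset.sum_mul, hrange]
  have hScast : ((S : ℕ) : ZMod r) = ∑ t : Fin n, i t := by
    rw [hS]
    push_cast
    exact Finset.sum_congr rfl fun t _ => ZMod.natCast_rightInverse (i t)
  have hxr : x ^ r = 1 := by
    rw [hx, ← pow_mul, mul_comm, pow_mul, hωr, one_pow]
  have hrC : (r : ℂ) ≠ 0 := Nat.cast_ne_zero.2 (NeZero.ne r)
  by_cases h0 : (∑ t : Fin n, i t) = 0
  · have hdvd : r ∣ S := (ZMod.natCast_eq_zero_iff S r).1 (hScast.trans h0)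
    have hx1 : x = 1 := (hprim.pow_eq_one_iff_dvd S).2 hdvd
    rw [if_pos h0, hmain, hdot1, hx1]
    simp only [one_pow, Finset.sum_const, Finset.card_range, nsmul_eq_mul, mul_one]
    rw [mul_one_div, div_self hrC, mul_one]
    congr 1
    rw [hc, hlam]
    push_cast
    rw [Finset.sum_congr rfl fun p (_ : p ∈ E) =>
      (mul_sub (α p : ℂ) (ω ^ (p.2 * ∑ t ∈ p.1, (i t).val)) 1 : _),
      Finset.sum_sub_distrib]
    simp [mul_one]
    ring
  · have hndvd : ¬ r ∣ S := fun hd =>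
      h0 (hScast.symm.trans ((ZMod.natCast_eq_zero_iff S r).2 hd))
    have hx1 : x ≠ 1 := fun hx1 => hndvd ((hprim.pow_eq_one_iff_dvd S).1 hx1)
    rw [if_neg h0, hmain, hdot1, geom_sum_eq hx1, hxr, sub_self, zero_div, zero_mul, mul_zero]
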